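/- arXiv:2404.13583 — 4 statements merged into one kernel-verified Lean document; each statement's English description precedes it below -/
import Mathlib

section
/- (Theorem 1) If the translational dynamics satisfy ξ''(t) = U(t) + D̂(t) with control U = U_eq + U_sw, where U_eq = v' − γ(ξ' − ᵈξ') − D̂ and U_sw = −(c₁·sg(s) + c₂·s) (sg applied componentwise), then the Lyapunov function ²V(t) = (1/2)‖s(t)‖² has derivative ²V'(t) = −c₁·⟨s(t), sg(s(t))⟩ − c₂·‖s(t)‖², and ²V'(t) ≤ 0 for all t; hence the position control system is Lyapunov stable. -/
open scoped InnerProductSpace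

/-- The saturated sign function with parameter `ε`. -/
noncomputable def sg (ε x : ℝ) : ℝ :=
  if x > ε then 1 else if x < -ε then -1 else x / ε

/-- `sg` applied componentwise to a vector in `ℝ³`. -/
noncomputable def sgVec (ε : ℝ) (v : EuclideanSpace ℝ (Fin 3)) :
    EuclideanSpace ℝ (Fin 3) :=
  WithLp.toLp 2 (fun i => sg ε (v i))

lemma sg_mul_nonneg (ε x : ℝ) (hε : 0 < ε) : 0 ≤ x * sg ε x := by
  unfold sg
  split_ifs with h1 h2
  · nlinarith
  · nlinarith
  · have : x * (x / ε) = x ^ 2 / ε := by ring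
    rw [this]; positivity

lemma inner_sgVec_nonneg (ε : ℝ) (hε : 0 < ε) (x : EuclideanSpace ℝ (Fin 3)) :
    0 ≤ ⟪x, sgVec ε x⟫_ℝ := by
  rw [PiLp.inner_apply]
  refine Finset.sum_nonneg fun i _ => ?_
  simpa [sgVec, mul_comm] using sg_mul_nonneg ε (x i) hε

/-- Theorem 1: under the control law `U = U_eq + U_sw`, the Lyapunov function
`²V = (1/2)‖s‖²` has derivative `−c₁⟨s, sg(s)⟩ − c₂‖s‖² ≤ 0`; the position
control system is Lyapunov stable. -/
theorem position_controller_stable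
    (ε lam γ c₁ c₂ : ℝ) (hε0 : 0 < ε) (hε1 : ε < 1)
    (hlam : 0 < lam) (hγ : 0 < γ) (hc₁ : 0 < c₁) (hc₂ : 0 < c₂)
    (ξ dξ Dhat U : ℝ → EuclideanSpace ℝ (Fin 3))
    (hξ : Differentiable ℝ ξ) (hξ' : Differentiable ℝ (deriv ξ))
    (hdξ : Differentiable ℝ dξ) (hdξ' : Differentiable ℝ (deriv dξ))
    (hDhat : Differentiable ℝ Dhat)
    (e v s : ℝ → EuclideanSpace ℝ (Fin 3))
    (he : e = fun t => ξ t - dξ t)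
    (hv : v = fun t => deriv dξ t - lam • e t)
    (hs : s = fun t => γ • e t + (deriv ξ t - v t))
    (hU : ∀ t, U t = (deriv v t - γ • (deriv ξ t - deriv dξ t) - Dhat t)
        + (-(c₁ • sgVec ε (s t) + c₂ • s t)))
    (hdyn : ∀ t, deriv (deriv ξ) t = U t + Dhat t) :
    ∀ t, HasDerivAt (fun r => (1 / 2 : ℝ) * ‖s r‖ ^ 2)
        (-(c₁ * ⟪s t, sgVec ε (s t)⟫_ℝ) - c₂ * ‖s t‖ ^ 2) t ∧
      -(c₁ * ⟪s t, sgVec ε (s t)⟫_ℝ) - c₂ * ‖s t‖ ^ 2 ≤ 0 := by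
  intro t
  -- derivatives of e and v
  have he' : ∀ r, HasDerivAt e (deriv ξ r - deriv dξ r) r := by
    intro r
    rw [he]
    exact ((hξ r).hasDerivAt.sub (hdξ r).hasDerivAt)
  have hv' : ∀ r, HasDerivAt v (deriv (deriv dξ) r
      - lam • (deriv ξ r - deriv dξ r)) r := by
    intro r
    rw [hv]
    exact ((hdξ' r).hasDerivAt.sub ((he' r).const_smul lam))
  have hderiv_v : ∀ r, deriv v r = deriv (deriv dξ) r
      - lam • (deriv ξ r - deriv dξ r) := fun r => (hv' r).deriv
  -- derivative of s
  have hs' : HasDerivAt s (-(c₁ • sgVec ε (s t) + c₂ • s t)) t := by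
    have h : HasDerivAt s (γ • (deriv ξ t - deriv dξ t)
        + (deriv (deriv ξ) t - (deriv (deriv dξ) t
          - lam • (deriv ξ t - deriv dξ t)))) t := by
      rw [hs]
      exact ((he' t).const_smul γ).add ((hξ' t).hasDerivAt.sub (hv' t))
    convert h using 1
    rw [hdyn t, hU t, hderiv_v t]
    abel
  -- derivative of the Lyapunov function
  have hinner : HasDerivAt (fun r => ⟪s r, s r⟫_ℝ)
      (⟪s t, -(c₁ • sgVec ε (s t) + c₂ • s t)⟫_ℝ
        + ⟪-(c₁ • sgVec ε (s t) + c₂ • s t), s t⟫_ℝ) t :=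
    hs'.inner ℝ hs'
  have hV : HasDerivAt (fun r => (1 / 2 : ℝ) * ‖s r‖ ^ 2)
      (-(c₁ * ⟪s t, sgVec ε (s t)⟫_ℝ) - c₂ * ‖s t‖ ^ 2) t := by
    have heq : (fun r => (1 / 2 : ℝ) * ‖s r‖ ^ 2)
        = fun r => (1 / 2 : ℝ) * ⟪s r, s r⟫_ℝ := by
      funext r
      rw [real_inner_self_eq_norm_sq]
    rw [heq]
    have := hinner.const_mul (1 / 2 : ℝ)
    refine this.congr_deriv ?_
    rw [real_inner_comm (s t)]
    rw [inner_neg_right, inner_add_right, real_inner_smul_right,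
      real_inner_smul_right, real_inner_self_eq_norm_sq]
    ring
  refine ⟨hV, ?_⟩
  have h1 := inner_sgVec_nonneg ε hε0 (s t)
  nlinarith [sq_nonneg ‖s t‖]
end

section
/- Suppose the sliding variable satisfies s'(t) = −c₁·sg(s(t)) − c₂·s(t) + (D(t) − D̂(t)), where the true disturbance is D(t) = Wᵀ·H(t) + σ(t), the estimated disturbance is D̂(t) = Ŵ(t)ᵀ·H(t), and the weight matrix evolves according to the update rule Ŵ'(t) = a·(H(t)·s(t)ᵀ − η‖s(t)‖·Ŵ(t)). Then the Lyapunov function V(t) = (1/2)‖s(t)‖² + (1/(2a))‖W − Ŵ(t)‖² has derivative V'(t) = −c₁·⟨s(t), sg(s(t))⟩ − c₂·‖s(t)‖² + ⟨s(t), σ(t)⟩ + η‖s(t)‖·tr(W̃(t)ᵀ(W − W̃(t))), where W̃(t) = W − Ŵ(t). -/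
open Matrix
open scoped InnerProductSpace

/-- Reinterpret a plain vector `Fin 3 → ℝ` as an element of `ℝ³`. -/
def toE3 (v : Fin 3 → ℝ) : EuclideanSpace ℝ (Fin 3) := WithLp.toLp 2 v

/-- The Frobenius norm of an `m × 3` real matrix: `‖A‖ = √(tr(AᵀA))`. -/
noncomputable def frob {m : ℕ} (A : Matrix (Fin m) (Fin 3) ℝ) : ℝ :=
  Real.sqrt (Matrix.trace (Aᵀ * A))

/-- With the RBFNN disturbance estimator and its weight update rule, the
Lyapunov function `V = (1/2)‖s‖² + (1/(2a))‖W − Ŵ‖²` has derivative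
`V' = −c₁⟨s, sg(s)⟩ − c₂‖s‖² + ⟨s, σ⟩ + η‖s‖ tr(W̃ᵀ(W − W̃))`. -/
theorem rbfnn_lyapunov_derivative {m : ℕ}
    (ε c₁ c₂ η a : ℝ) (hε0 : 0 < ε) (hε1 : ε < 1)
    (hc₁ : 0 < c₁) (hc₂ : 0 < c₂) (hη : 0 < η) (ha : 0 < a)
    (s : ℝ → EuclideanSpace ℝ (Fin 3)) (hs : Differentiable ℝ s)
    (H : ℝ → EuclideanSpace ℝ (Fin m)) (hH : Continuous H)
    (σ : ℝ → EuclideanSpace ℝ (Fin 3)) (hσ : Continuous σ)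
    (W : Matrix (Fin m) (Fin 3) ℝ)
    (What : ℝ → Matrix (Fin m) (Fin 3) ℝ)
    (D Dhat : ℝ → EuclideanSpace ℝ (Fin 3))
    (hD : ∀ t, D t = toE3 (Wᵀ.mulVec (H t)) + σ t)
    (hDhat : ∀ t, Dhat t = toE3 ((What t)ᵀ.mulVec (H t)))
    (hWhat : ∀ t i j, HasDerivAt (fun r => What r i j)
        (a * (Matrix.vecMulVec (H t) (s t) i j - η * ‖s t‖ * What t i j)) t)
    (hsd : ∀ t, deriv s t = -(c₁ • sgVec ε (s t)) - c₂ • s t + (D t - Dhat t)) :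
    ∀ t, HasDerivAt
        (fun r => (1 / 2 : ℝ) * ‖s r‖ ^ 2 + (1 / (2 * a)) * frob (W - What r) ^ 2)
        (-(c₁ * ⟪s t, sgVec ε (s t)⟫_ℝ) - c₂ * ‖s t‖ ^ 2 + ⟪s t, σ t⟫_ℝ
          + η * ‖s t‖ * Matrix.trace ((W - What t)ᵀ * (W - (W - What t)))) t := by
  intro t
  have ha' : (a : ℝ) ≠ 0 := ne_of_gt ha
  -- component derivatives of s
  have hsc : ∀ j : Fin 3, HasDerivAt (fun r => s r j) (deriv s t j) t := fun j =>
    (EuclideanSpace.proj j : EuclideanSpace ℝ (Fin 3) →L[ℝ] ℝ).hasFDerivAt.comp_hasDerivAt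
      t (hs t).hasDerivAt
  -- rewrite the Lyapunov function as explicit sums
  have hfun : (fun r => (1 / 2 : ℝ) * ‖s r‖ ^ 2 + (1 / (2 * a)) * frob (W - What r) ^ 2)
      = (fun r => (1 / 2 : ℝ) * (∑ j, s r j * s r j)
          + (1 / (2 * a)) * (∑ j, ∑ i, (W i j - What r i j) * (W i j - What r i j))) := by
    funext r
    congr 1
    · congr 1
      rw [EuclideanSpace.norm_sq_eq]
      simp [Real.norm_eq_abs, sq]
    · congr 1
      rw [frob, Real.sq_sqrt]
      · simp [Matrix.trace, Matrix.mul_apply, Matrix.diag]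
      · simp only [Matrix.trace, Matrix.mul_apply, Matrix.diag, Matrix.transpose_apply,
          Matrix.sub_apply]
        exact Finset.sum_nonneg fun j _ => Finset.sum_nonneg fun i _ => mul_self_nonneg _
  -- derivative of each squared weight error
  have hWsq : ∀ (i : Fin m) (j : Fin 3),
      HasDerivAt (fun r => (W i j - What r i j) * (W i j - What r i j))
        (2 * a * (η * ‖s t‖ * ((W i j - What t i j) * What t i j)
          - (W i j - What t i j) * (H t i * s t j))) t := by
    intro i j
    have h1 : HasDerivAt (fun r => W i j - What r i j)
        (-(a * (H t i * s t j - η * ‖s t‖ * What t i j))) t := by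
      simpa [Matrix.vecMulVec_apply] using (hWhat t i j).const_sub (W i j)
    have h2 := h1.fun_mul h1
    exact h2.congr_deriv (by ring)
  -- derivative of each squared s component
  have hssq : ∀ j : Fin 3, HasDerivAt (fun r => s r j * s r j)
      (2 * (s t j * deriv s t j)) t := by
    intro j
    have := (hsc j).fun_mul (hsc j)
    exact this.congr_deriv (by ring)
  -- assemble
  have key : HasDerivAt
      (fun r => (1 / 2 : ℝ) * (∑ j, s r j * s r j)
          + (1 / (2 * a)) * (∑ j, ∑ i, (W i j - What r i j) * (W i j - What r i j)))
      ((1 / 2 : ℝ) * (∑ j, 2 * (s t j * deriv s t j))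
        + (1 / (2 * a)) * (∑ j : Fin 3, ∑ i : Fin m, 2 * a * (η * ‖s t‖ *
            ((W i j - What t i j) * What t i j)
            - (W i j - What t i j) * (H t i * s t j)))) t := by
    exact ((HasDerivAt.fun_sum fun j _ => hssq j).const_mul _).add
      ((HasDerivAt.fun_sum fun j _ => HasDerivAt.fun_sum fun i _ => hWsq i j).const_mul _)
  rw [hfun]
  convert key using 1
  -- now prove the derivative values agree
  -- simplify the constant factors
  have c1 : (1 / 2 : ℝ) * (∑ j, 2 * (s t j * deriv s t j)) = ∑ j, s t j * deriv s t j := by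
    rw [← Finset.mul_sum]; ring
  have c2 : (1 / (2 * a) : ℝ) * (∑ j : Fin 3, ∑ i : Fin m, 2 * a * (η * ‖s t‖ *
        ((W i j - What t i j) * What t i j) - (W i j - What t i j) * (H t i * s t j)))
      = ∑ j : Fin 3, ∑ i : Fin m, (η * ‖s t‖ * ((W i j - What t i j) * What t i j)
          - (W i j - What t i j) * (H t i * s t j)) := by
    simp only [← Finset.mul_sum]
    field_simp
  rw [c1, c2]
  -- expand the component derivative of s
  have e1 : ∀ j : Fin 3, deriv s t j = -(c₁ * sg ε (s t j)) - c₂ * s t j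
      + ((∑ i, W i j * H t i) + σ t j - ∑ i, What t i j * H t i) := by
    intro j
    rw [hsd t]
    simp [hD, hDhat, toE3, Matrix.mulVec, dotProduct, sgVec, Matrix.transpose_apply,
      mul_comm]
  -- expand inner products and trace on the LHS (the target value)
  have t1 : ⟪s t, sgVec ε (s t)⟫_ℝ = ∑ j, s t j * sg ε (s t j) := by
    simp [PiLp.inner_apply, sgVec, mul_comm]
  have t2 : ‖s t‖ ^ 2 = ∑ j, s t j * s t j := by
    rw [EuclideanSpace.norm_sq_eq]; simp [Real.norm_eq_abs, sq]
  have t3 : ⟪s t, σ t⟫_ℝ = ∑ j, s t j * σ t j := by simp [PiLp.inner_apply, mul_comm]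
  have t4 : Matrix.trace ((W - What t)ᵀ * (W - (W - What t)))
      = ∑ j : Fin 3, ∑ i : Fin m, (W i j - What t i j) * What t i j := by
    simp [Matrix.trace, Matrix.mul_apply, Matrix.diag, Matrix.sub_apply, sub_sub_cancel]
  rw [t1, t2, t3, t4]
  -- per-index identity, then sum
  have perj : ∀ j : Fin 3, s t j * deriv s t j
      + ∑ i : Fin m, (η * ‖s t‖ * ((W i j - What t i j) * What t i j)
          - (W i j - What t i j) * (H t i * s t j))
      = -(c₁ * (s t j * sg ε (s t j))) - c₂ * (s t j * s t j) + s t j * σ t j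
        + η * ‖s t‖ * ∑ i : Fin m, (W i j - What t i j) * What t i j := by
    intro j
    rw [e1 j, Finset.sum_sub_distrib]
    have hx : ∑ i : Fin m, (W i j - What t i j) * (H t i * s t j)
        = ((∑ i, W i j * H t i) - ∑ i, What t i j * H t i) * s t j := by
      rw [← Finset.sum_sub_distrib, Finset.sum_mul]
      exact Finset.sum_congr rfl fun i _ => by ring
    rw [hx, Finset.mul_sum]
    ring
  calc -(c₁ * ∑ j, s t j * sg ε (s t j)) - c₂ * ∑ j, s t j * s t j
        + (∑ j, s t j * σ t j)
        + η * ‖s t‖ * ∑ j : Fin 3, ∑ i : Fin m, (W i j - What t i j) * What t i j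
      = ∑ j : Fin 3, (-(c₁ * (s t j * sg ε (s t j))) - c₂ * (s t j * s t j)
          + s t j * σ t j
          + η * ‖s t‖ * ∑ i : Fin m, (W i j - What t i j) * What t i j) := by
        simp only [Finset.sum_add_distrib, Finset.sum_sub_distrib, Finset.mul_sum,
          Finset.sum_neg_distrib]
    _ = ∑ j : Fin 3, (s t j * deriv s t j
          + ∑ i : Fin m, (η * ‖s t‖ * ((W i j - What t i j) * What t i j)
              - (W i j - What t i j) * (H t i * s t j))) := by
        exact Finset.sum_congr rfl fun j _ => (perj j).symm
    _ = (∑ j, s t j * deriv s t j)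
        + ∑ j : Fin 3, ∑ i : Fin m, (η * ‖s t‖ * ((W i j - What t i j) * What t i j)
            - (W i j - What t i j) * (H t i * s t j)) := by
        rw [Finset.sum_add_distrib]
end

section
/- (Theorem 2) Suppose the sliding variable satisfies s'(t) = −c₁·sg(s(t)) − c₂·s(t) + (D(t) − D̂(t)), where D(t) = Wᵀ·H(t) + σ(t), D̂(t) = Ŵ(t)ᵀ·H(t), the approximation error is bounded ‖σ(t)‖ ≤ σ̄, the ideal weights are bounded ‖W‖ ≤ W̄, and the weights evolve by Ŵ'(t) = a·(H(t)·s(t)ᵀ − η‖s(t)‖·Ŵ(t)). If the inequality ‖s(t)‖ ≥ (σ̄ + (1/4)ηW̄²)/c₂ holds, then the Lyapunov function V(t) = (1/2)‖s(t)‖² + (1/(2a))‖W − Ŵ(t)‖² satisfies V'(t) ≤ −c₁·⟨s(t), sg(s(t))⟩ − η‖s(t)‖·((1/2)‖W‖ − ‖W − Ŵ(t)‖)² ≤ 0; hence the position control system is stable. -/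
open Matrix
open scoped InnerProductSpace

lemma trace_eq_sum_sq {m : ℕ} (A : Matrix (Fin m) (Fin 3) ℝ) :
    Matrix.trace (Aᵀ * A) = ∑ i, ∑ j, A i j ^ 2 := by
  rw [Matrix.trace]
  simp only [Matrix.diag_apply, Matrix.mul_apply, Matrix.transpose_apply]
  rw [Finset.sum_comm]
  simp [sq]

lemma frob_eq_sqrt {m : ℕ} (A : Matrix (Fin m) (Fin 3) ℝ) :
    frob A = Real.sqrt (∑ i, ∑ j, A i j ^ 2) := by
  rw [frob, trace_eq_sum_sq]

lemma frob_nonneg' {m : ℕ} (A : Matrix (Fin m) (Fin 3) ℝ) : 0 ≤ frob A :=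
  Real.sqrt_nonneg _

lemma frob_sq {m : ℕ} (A : Matrix (Fin m) (Fin 3) ℝ) :
    frob A ^ 2 = ∑ i, ∑ j, A i j ^ 2 := by
  rw [frob_eq_sqrt, Real.sq_sqrt (by positivity)]

lemma frob_cs {m : ℕ} (A B : Matrix (Fin m) (Fin 3) ℝ) :
    ∑ i, ∑ j, A i j * B i j ≤ frob A * frob B := by
  let x : EuclideanSpace ℝ (Fin m × Fin 3) := WithLp.toLp 2 (fun p => A p.1 p.2)
  let y : EuclideanSpace ℝ (Fin m × Fin 3) := WithLp.toLp 2 (fun p => B p.1 p.2)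
  have h1 : ⟪x, y⟫_ℝ = ∑ i, ∑ j, A i j * B i j := by
    rw [PiLp.inner_apply, Fintype.sum_prod_type]
    simp [x, y, mul_comm]
  have h2 : ‖x‖ = frob A := by
    rw [EuclideanSpace.norm_eq, frob_eq_sqrt]
    rw [Fintype.sum_prod_type]
    simp [x, Real.norm_eq_abs, sq_abs]
  have h3 : ‖y‖ = frob B := by
    rw [EuclideanSpace.norm_eq, frob_eq_sqrt]
    rw [Fintype.sum_prod_type]
    simp [y, Real.norm_eq_abs, sq_abs]
  have := real_inner_le_norm x y
  rwa [h1, h2, h3] at this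

lemma mul_sg_nonneg {ε : ℝ} (hε : 0 < ε) (x : ℝ) : 0 ≤ x * sg ε x := by
  unfold sg
  split_ifs with h1 h2
  · nlinarith
  · nlinarith
  · have h : x * (x / ε) = x ^ 2 / ε := by ring
    rw [h]; positivity

/-- Theorem 2: with the RBFNN estimator, bounded approximation error
`‖σ‖ ≤ σ̄` and bounded ideal weights `‖W‖ ≤ W̄`, if
`‖s(t)‖ ≥ (σ̄ + ηW̄²/4)/c₂` then the Lyapunov function
`V = (1/2)‖s‖² + (1/(2a))‖W − Ŵ‖²` satisfies
`V' ≤ −c₁⟨s, sg(s)⟩ − η‖s‖((1/2)‖W‖ − ‖W̃‖)² ≤ 0`. -/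
theorem rbfnn_position_controller_stable {m : ℕ}
    (ε c₁ c₂ η a σbar Wbar : ℝ) (hε0 : 0 < ε) (hε1 : ε < 1)
    (hc₁ : 0 < c₁) (hc₂ : 0 < c₂) (hη : 0 < η) (ha : 0 < a)
    (hσbar : 0 ≤ σbar) (hWbar : 0 ≤ Wbar)
    (s : ℝ → EuclideanSpace ℝ (Fin 3)) (hs : Differentiable ℝ s)
    (H : ℝ → EuclideanSpace ℝ (Fin m)) (hH : Continuous H)
    (σ : ℝ → EuclideanSpace ℝ (Fin 3)) (hσ : Continuous σ)
    (hσb : ∀ t, ‖σ t‖ ≤ σbar)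
    (W : Matrix (Fin m) (Fin 3) ℝ) (hWb : frob W ≤ Wbar)
    (What : ℝ → Matrix (Fin m) (Fin 3) ℝ)
    (D Dhat : ℝ → EuclideanSpace ℝ (Fin 3))
    (hD : ∀ t, D t = toE3 (Wᵀ.mulVec (H t)) + σ t)
    (hDhat : ∀ t, Dhat t = toE3 ((What t)ᵀ.mulVec (H t)))
    (hWhat : ∀ t i j, HasDerivAt (fun r => What r i j)
        (a * (Matrix.vecMulVec (H t) (s t) i j - η * ‖s t‖ * What t i j)) t)
    (hsd : ∀ t, deriv s t = -(c₁ • sgVec ε (s t)) - c₂ • s t + (D t - Dhat t)) :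
    ∀ t, (σbar + (1 / 4) * η * Wbar ^ 2) / c₂ ≤ ‖s t‖ →
      deriv (fun r => (1 / 2 : ℝ) * ‖s r‖ ^ 2
          + (1 / (2 * a)) * frob (W - What r) ^ 2) t
        ≤ -(c₁ * ⟪s t, sgVec ε (s t)⟫_ℝ)
          - η * ‖s t‖ * ((1 / 2) * frob W - frob (W - What t)) ^ 2 ∧
      -(c₁ * ⟪s t, sgVec ε (s t)⟫_ℝ)
          - η * ‖s t‖ * ((1 / 2) * frob W - frob (W - What t)) ^ 2 ≤ 0 := by
  intro t hst
  have hns : (0:ℝ) ≤ ‖s t‖ := norm_nonneg _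
  have hP : 0 ≤ ⟪s t, sgVec ε (s t)⟫_ℝ := by
    rw [PiLp.inner_apply]
    refine Finset.sum_nonneg fun j _ => ?_
    simpa [sgVec, mul_comm] using mul_sg_nonneg hε0 (s t j)
  have hsq : 0 ≤ η * ‖s t‖ * ((1 / 2) * frob W - frob (W - What t)) ^ 2 := by
    positivity
  refine ⟨?_, by nlinarith⟩
  -- derivative of ‖s r‖ ^ 2
  have h1 : HasDerivAt (fun r => ‖s r‖ ^ 2) (2 * ⟪s t, deriv s t⟫_ℝ) t := by
    have h := HasDerivAt.inner ℝ (hs t).hasDerivAt (hs t).hasDerivAt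
    have hfun : (fun r => ⟪s r, s r⟫_ℝ) = fun r => ‖s r‖ ^ 2 :=
      funext fun r => real_inner_self_eq_norm_sq (s r)
    rw [hfun] at h
    have e : (2 * ⟪s t, deriv s t⟫_ℝ) = ⟪s t, deriv s t⟫_ℝ + ⟪deriv s t, s t⟫_ℝ := by
      rw [real_inner_comm]; ring
    rw [e]; exact h
  -- derivative of the weight–error term
  have h2 : HasDerivAt (fun r => ∑ i, ∑ j, (W i j - What r i j) ^ 2)
      (∑ i, ∑ j, (-2) * a * ((W i j - What t i j)
        * (H t i * s t j - η * ‖s t‖ * What t i j))) t := by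
    refine HasDerivAt.fun_sum fun i _ => ?_
    refine HasDerivAt.fun_sum fun j _ => ?_
    have h := ((hWhat t i j).const_sub (W i j)).pow 2
    refine h.congr_deriv ?_
    simp [Matrix.vecMulVec_apply]
    ring
  have hfr : (fun r => (1 / 2 : ℝ) * ‖s r‖ ^ 2
      + (1 / (2 * a)) * frob (W - What r) ^ 2)
      = fun r => (1 / 2 : ℝ) * ‖s r‖ ^ 2
      + (1 / (2 * a)) * ∑ i, ∑ j, (W i j - What r i j) ^ 2 := by
    funext r
    rw [frob_sq]
    simp [Matrix.sub_apply]
  have hV : HasDerivAt (fun r => (1 / 2 : ℝ) * ‖s r‖ ^ 2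
      + (1 / (2 * a)) * frob (W - What r) ^ 2)
      ((1 / 2) * (2 * ⟪s t, deriv s t⟫_ℝ)
        + (1 / (2 * a)) * ∑ i, ∑ j, (-2) * a * ((W i j - What t i j)
          * (H t i * s t j - η * ‖s t‖ * What t i j))) t := by
    rw [hfr]
    exact (h1.const_mul ((1:ℝ)/2)).add (h2.const_mul (1/(2*a)))
  rw [hV.deriv]
  -- compute the inner product ⟪s, s'⟫
  have hinner : ⟪s t, deriv s t⟫_ℝ
      = -(c₁ * ⟪s t, sgVec ε (s t)⟫_ℝ) - c₂ * ‖s t‖ ^ 2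
        + ((∑ i, ∑ j, (W i j - What t i j) * (H t i * s t j)) + ⟪s t, σ t⟫_ℝ) := by
    rw [hsd t, hD t, hDhat t]
    rw [inner_add_right, inner_sub_right, inner_neg_right, real_inner_smul_right,
      real_inner_smul_right, real_inner_self_eq_norm_sq]
    have key : ⟪s t, toE3 (Wᵀ.mulVec (H t)) + σ t - toE3 ((What t)ᵀ.mulVec (H t))⟫_ℝ
        = (∑ i, ∑ j, (W i j - What t i j) * (H t i * s t j)) + ⟪s t, σ t⟫_ℝ := by
      rw [PiLp.inner_apply, PiLp.inner_apply]
      simp only [RCLike.inner_apply, conj_trivial, PiLp.sub_apply, PiLp.add_apply]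
      have hterm : ∀ j, s t j * ((toE3 (Wᵀ.mulVec (H t)) j + σ t j)
            - toE3 ((What t)ᵀ.mulVec (H t)) j)
          = (∑ i, (W i j - What t i j) * (H t i * s t j)) + s t j * σ t j := by
        intro j
        simp only [toE3, WithLp.ofLp_toLp, Matrix.mulVec, dotProduct, Matrix.transpose_apply]
        show s t j * ((∑ i, W i j * H t i) + σ t j - ∑ i, What t i j * H t i)
          = (∑ i, (W i j - What t i j) * (H t i * s t j)) + s t j * σ t j
        rw [show s t j * ((∑ i, W i j * H t i) + σ t j - ∑ i, What t i j * H t i)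
            = ((∑ i, W i j * H t i) * s t j - (∑ i, What t i j * H t i) * s t j)
              + s t j * σ t j from by ring]
        rw [Finset.sum_mul, Finset.sum_mul, ← Finset.sum_sub_distrib]
        congr 1
        exact Finset.sum_congr rfl fun i _ => by ring
      calc _ = ∑ j, s t j * ((toE3 (Wᵀ.mulVec (H t)) j + σ t j)
              - toE3 ((What t)ᵀ.mulVec (H t)) j) :=
              Finset.sum_congr rfl fun j _ => mul_comm _ _
        _ = ∑ j, ((∑ i, (W i j - What t i j) * (H t i * s t j)) + s t j * σ t j) :=
            Finset.sum_congr rfl fun j _ => hterm j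
        _ = (∑ j, ∑ i, (W i j - What t i j) * (H t i * s t j)) + ∑ j, s t j * σ t j :=
            Finset.sum_add_distrib
        _ = (∑ i, ∑ j, (W i j - What t i j) * (H t i * s t j)) + ∑ j, s t j * σ t j := by
            rw [Finset.sum_comm]
        _ = _ := by
            congr 1
            exact Finset.sum_congr rfl fun j _ => mul_comm _ _
    rw [key]
  -- compute the weight-derivative contribution
  have hG : (1 / (2 * a)) * (∑ i, ∑ j, (-2) * a * ((W i j - What t i j)
        * (H t i * s t j - η * ‖s t‖ * What t i j)))
      = -(∑ i, ∑ j, (W i j - What t i j) * (H t i * s t j))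
        + η * ‖s t‖ * ∑ i, ∑ j, (W i j - What t i j) * What t i j := by
    have ha' : a ≠ 0 := ne_of_gt ha
    rw [Finset.mul_sum]
    have hterm : ∀ i : Fin m, (1 / (2 * a)) * (∑ j, (-2) * a * ((W i j - What t i j)
          * (H t i * s t j - η * ‖s t‖ * What t i j)))
        = -(∑ j, (W i j - What t i j) * (H t i * s t j))
          + η * ‖s t‖ * ∑ j, (W i j - What t i j) * What t i j := by
      intro i
      rw [Finset.mul_sum]
      have : ∀ j : Fin 3, (1 / (2 * a)) * ((-2) * a * ((W i j - What t i j)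
            * (H t i * s t j - η * ‖s t‖ * What t i j)))
          = -((W i j - What t i j) * (H t i * s t j))
            + η * ‖s t‖ * ((W i j - What t i j) * What t i j) := by
        intro j; field_simp; ring
      rw [Finset.sum_congr rfl fun j _ => this j, Finset.sum_add_distrib,
        ← Finset.sum_neg_distrib, ← Finset.mul_sum]
    rw [Finset.sum_congr rfl fun i _ => hterm i, Finset.sum_add_distrib,
      ← Finset.sum_neg_distrib, ← Finset.mul_sum]
  rw [hinner, hG]
  -- bound the remaining terms
  have hσs : ⟪s t, σ t⟫_ℝ ≤ ‖s t‖ * σbar :=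
    (real_inner_le_norm _ _).trans (mul_le_mul_of_nonneg_left (hσb t) hns)
  have hB : (∑ i, ∑ j, (W i j - What t i j) * What t i j)
      ≤ frob (W - What t) * frob W - frob (W - What t) ^ 2 := by
    have hdec : ∀ i j, (W i j - What t i j) * What t i j
        = (W i j - What t i j) * W i j - (W i j - What t i j) ^ 2 := by
      intro i j; ring
    have h1 : (∑ i, ∑ j, (W i j - What t i j) * What t i j)
        = (∑ i, ∑ j, (W i j - What t i j) * W i j)
          - ∑ i, ∑ j, (W i j - What t i j) ^ 2 := by
      rw [← Finset.sum_sub_distrib]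
      refine Finset.sum_congr rfl fun i _ => ?_
      rw [← Finset.sum_sub_distrib]
      exact Finset.sum_congr rfl fun j _ => hdec i j
    have h2 : (∑ i, ∑ j, (W i j - What t i j) * W i j)
        ≤ frob (W - What t) * frob W := by
      have := frob_cs (W - What t) W
      simpa [Matrix.sub_apply] using this
    have h3 : frob (W - What t) ^ 2 = ∑ i, ∑ j, (W i j - What t i j) ^ 2 := by
      rw [frob_sq]; simp [Matrix.sub_apply]
    linarith
  have hηns : (0:ℝ) ≤ η * ‖s t‖ := mul_nonneg hη.le hns
  have e1 : η * ‖s t‖ * (∑ i, ∑ j, (W i j - What t i j) * What t i j)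
      ≤ η * ‖s t‖ * (frob (W - What t) * frob W - frob (W - What t) ^ 2) :=
    mul_le_mul_of_nonneg_left hB hηns
  have hW2 : frob W ^ 2 ≤ Wbar ^ 2 := by
    have := frob_nonneg' W
    nlinarith
  have e2 : η * ‖s t‖ * frob W ^ 2 ≤ η * ‖s t‖ * Wbar ^ 2 :=
    mul_le_mul_of_nonneg_left hW2 hηns
  have hkey : σbar + (1 / 4) * η * Wbar ^ 2 ≤ ‖s t‖ * c₂ :=
    (div_le_iff₀ hc₂).mp hst
  have e3 : ‖s t‖ * (σbar + (1 / 4) * η * Wbar ^ 2) ≤ ‖s t‖ * (‖s t‖ * c₂) :=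
    mul_le_mul_of_nonneg_left hkey hns
  nlinarith [e1, e2, e3, hσs]
end

section
/- (Converter consistency) Let u_x, u_y, u_z, ψ, g be real numbers with u_z + g > 0. Define θ = arctan((u_x·cos ψ + u_y·sin ψ)/(u_z + g)), φ = arctan(cos θ·(u_x·sin ψ − u_y·cos ψ)/(u_z + g)), and f_t = (u_z + g)/(cos φ·cos θ). Then (cos φ·sin θ·cos ψ + sin φ·sin ψ)·f_t = u_x, (cos φ·sin θ·sin ψ − sin φ·cos ψ)·f_t = u_y, and cos φ·cos θ·f_t − g = u_z. -/
open Real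

/-- Converter consistency: the converter block's formulas for the desired pitch
angle `θ`, desired roll angle `φ` and total thrust `f_t` exactly invert the
quadrotor translational force equations. -/
theorem converter_consistency (ux uy uz ψ g : ℝ) (h : 0 < uz + g) :
    let θ := Real.arctan ((ux * Real.cos ψ + uy * Real.sin ψ) / (uz + g))
    let φ := Real.arctan (Real.cos θ * (ux * Real.sin ψ - uy * Real.cos ψ) / (uz + g))
    let ft := (uz + g) / (Real.cos φ * Real.cos θ)
    (Real.cos φ * Real.sin θ * Real.cos ψ + Real.sin φ * Real.sin ψ) * ft = ux ∧
    (Real.cos φ * Real.sin θ * Real.sin ψ - Real.sin φ * Real.cos ψ) * ft = uy ∧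
    Real.cos φ * Real.cos θ * ft - g = uz := by
  intro θ φ ft
  have hz : uz + g ≠ 0 := ne_of_gt h
  have hθ : θ = Real.arctan ((ux * Real.cos ψ + uy * Real.sin ψ) / (uz + g)) := rfl
  have hφ : φ = Real.arctan (Real.cos θ * (ux * Real.sin ψ - uy * Real.cos ψ) / (uz + g)) := rfl
  have hcθ : 0 < Real.cos θ := by rw [hθ]; exact Real.cos_arctan_pos _
  have hcφ : 0 < Real.cos φ := by rw [hφ]; exact Real.cos_arctan_pos _
  have htθ : Real.sin θ / Real.cos θ = (ux * Real.cos ψ + uy * Real.sin ψ) / (uz + g) := by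
    rw [← Real.tan_eq_sin_div_cos, hθ, Real.tan_arctan]
  have htφ : Real.sin φ / Real.cos φ = Real.cos θ * (ux * Real.sin ψ - uy * Real.cos ψ) / (uz + g) := by
    rw [← Real.tan_eq_sin_div_cos, hφ, Real.tan_arctan]
  have hsθ : Real.sin θ = (ux * Real.cos ψ + uy * Real.sin ψ) / (uz + g) * Real.cos θ := by
    field_simp at htθ ⊢; linarith
  have hsφ : Real.sin φ = Real.cos θ * (ux * Real.sin ψ - uy * Real.cos ψ) / (uz + g) * Real.cos φ := by
    field_simp at htφ ⊢; linarith
  have hft : ft = (uz + g) / (Real.cos φ * Real.cos θ) := rfl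
  have hp := Real.sin_sq_add_cos_sq ψ
  refine ⟨?_, ?_, ?_⟩
  · rw [hft, hsθ, hsφ]; field_simp
    linear_combination ux * hp
  · rw [hft, hsθ, hsφ]; field_simp
    linear_combination uy * hp
  · rw [hft]; field_simp; ring
end
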